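/- Let n ≥ 2 and let X ⊆ ℝⁿ be a polytope with exactly 2 vertices (extreme points). Then there exists a finite set D ⊆ ℝⁿ of directions with |D| ≤ 5n - 3 such that D determines X within the class of all polytopes in ℝⁿ having at most 3 extreme points. (Convergence of Algorithm 3 in the case n_v = 2 with known bound n̄ = 3: it terminates after at most 5n - 3 oracle calls with X_v = S_v.) -/

import Mathlib

set_option maxHeartbeats 1000000


open RealInnerProductSpace

/-- Support function of a subset of `ℝⁿ`. -/
noncomputable def supp {n : ℕ} (X : Set (EuclideanSpace ℝ (Fin n)))
    (d : EuclideanSpace ℝ (Fin n)) : ℝ :=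
  sSup ((fun v => ⟪v, d⟫) '' X)

/-- `X` is a polytope: the convex hull of a nonempty finite set. -/
def IsPolytope {n : ℕ} (X : Set (EuclideanSpace ℝ (Fin n))) : Prop :=
  ∃ F : Finset (EuclideanSpace ℝ (Fin n)), F.Nonempty ∧ X = convexHull ℝ (F : Set _)

/-- The finite direction set `D` determines `X` within the class `𝒞`. -/
def Determines {n : ℕ} (𝒞 : Set (Set (EuclideanSpace ℝ (Fin n))))
    (D : Finset (EuclideanSpace ℝ (Fin n))) (X : Set (EuclideanSpace ℝ (Fin n))) : Prop :=
  ∀ Y ∈ 𝒞, (∀ d ∈ D, supp Y d = supp X d) → Y = X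

lemma supp_le_of_mem {n : ℕ} {Y : Set (EuclideanSpace ℝ (Fin n))} (hY : IsCompact Y)
    {y : EuclideanSpace ℝ (Fin n)} (hy : y ∈ Y) (d : EuclideanSpace ℝ (Fin n)) :
    ⟪y, d⟫ ≤ supp Y d :=
  le_csSup (hY.image (continuous_id.inner continuous_const)).bddAbove ⟨y, hy, rfl⟩

lemma exists_supp_eq {n : ℕ} {Y : Set (EuclideanSpace ℝ (Fin n))} (hY : IsCompact Y)
    (hne : Y.Nonempty) (d : EuclideanSpace ℝ (Fin n)) :
    ∃ y ∈ Y, ⟪y, d⟫ = supp Y d := by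
  obtain ⟨y, hy, hmax⟩ := hY.exists_isMaxOn (f := fun v => (⟪v, d⟫ : ℝ)) hne
    ((continuous_id.inner continuous_const).continuousOn)
  refine ⟨y, hy, le_antisymm (supp_le_of_mem hY hy d) ?_⟩
  refine csSup_le (hne.image _) ?_
  rintro r ⟨z, hz, rfl⟩
  exact hmax hz

lemma supp_eq_of_isMaxOn {n : ℕ} {Y : Set (EuclideanSpace ℝ (Fin n))} (hY : IsCompact Y)
    {y : EuclideanSpace ℝ (Fin n)} (hy : y ∈ Y) (d : EuclideanSpace ℝ (Fin n))
    (hmax : ∀ z ∈ Y, ⟪z, d⟫ ≤ ⟪y, d⟫) : supp Y d = ⟪y, d⟫ := by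
  refine le_antisymm (csSup_le (Set.Nonempty.image _ ⟨y, hy⟩) ?_) (supp_le_of_mem hY hy d)
  rintro r ⟨z, hz, rfl⟩
  exact hmax z hz

/-- a polytope `X ⊆ ℝⁿ` (`n ≥ 2`) with exactly `2` vertices is
determined by at most `5n - 3` directions within the class of polytopes in `ℝⁿ`
with at most `3` extreme points. -/
theorem stmt_12 (n : ℕ) (hn : 2 ≤ n) (X : Set (EuclideanSpace ℝ (Fin n)))
    (hX : IsPolytope X) (hcard : (Set.extremePoints ℝ X).ncard = 2) :
    ∃ D : Finset (EuclideanSpace ℝ (Fin n)), D.card ≤ 5 * n - 3 ∧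
      Determines {Y | IsPolytope Y ∧ (Set.extremePoints ℝ Y).ncard ≤ 3} D X := by
  classical
  obtain ⟨F, hFne, hXF⟩ := hX
  have hXcomp : IsCompact X := hXF ▸ F.finite_toSet.isCompact_convexHull ℝ
  have hXconv : Convex ℝ X := hXF ▸ convex_convexHull ℝ _
  obtain ⟨a, b, hab, hE⟩ := Set.ncard_eq_two.mp hcard
  have hXseg : X = segment ℝ a b := by
    have h1 := closure_convexHull_extremePoints hXcomp hXconv
    rw [hE] at h1
    have h2 : IsClosed (convexHull ℝ ({a, b} : Set (EuclideanSpace ℝ (Fin n)))) :=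
      ((Set.finite_singleton b).insert a).isClosed_convexHull ℝ
    rw [← h1, h2.closure_eq, convexHull_pair]
  set u := b - a with hu
  have hu0 : u ≠ 0 := sub_ne_zero.mpr hab.symm
  have hba : a + u = b := by simp [hu]
  set K := (ℝ ∙ u)ᗮ with hK
  have huu : (0:ℝ) < ⟪u, u⟫ := by
    rw [real_inner_self_eq_norm_sq]
    exact pow_pos (norm_pos_iff.mpr hu0) 2
  have hdim : Module.finrank ℝ K = n - 1 := by
    have h2 := Submodule.finrank_add_finrank_orthogonal (𝕜 := ℝ) (ℝ ∙ u)
    rw [finrank_euclideanSpace_fin, finrank_span_singleton hu0] at h2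
    rw [hK]
    omega
  set m := Module.finrank ℝ K with hm
  let bK : Module.Basis (Fin m) ℝ K := Module.finBasis ℝ K
  let w : Fin m → EuclideanSpace ℝ (Fin n) := fun i => (bK i : EuclideanSpace ℝ (Fin n))
  have hwK : ∀ i, w i ∈ K := fun i => (bK i).2
  have hwu : ∀ i, ⟪u, w i⟫ = 0 := fun i =>
    (Submodule.mem_orthogonal _ _).mp (hwK i) u (Submodule.mem_span_singleton_self u)
  let D : Finset (EuclideanSpace ℝ (Fin n)) :=
    (Finset.image w Finset.univ ∪ Finset.image (fun i => -(w i)) Finset.univ) ∪ {u, -u}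
  have hu_mem : u ∈ D := by simp [D]
  have hnu_mem : -u ∈ D := by simp [D]
  have hw_mem : ∀ i, w i ∈ D := by
    intro i
    simp only [D, Finset.mem_union, Finset.mem_image, Finset.mem_univ]
    exact Or.inl (Or.inl ⟨i, trivial, rfl⟩)
  have hnw_mem : ∀ i, -(w i) ∈ D := by
    intro i
    simp only [D, Finset.mem_union, Finset.mem_image, Finset.mem_univ]
    exact Or.inl (Or.inr ⟨i, trivial, rfl⟩)
  refine ⟨D, ?_, ?_⟩
  · calc D.card ≤ (Finset.image w Finset.univ ∪ Finset.image (fun i => -(w i)) Finset.univ).card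
        + ({u, -u} : Finset _).card := Finset.card_union_le _ _
      _ ≤ ((Finset.image w Finset.univ).card + (Finset.image (fun i => -(w i)) Finset.univ).card)
        + ({u, -u} : Finset _).card := by
          exact Nat.add_le_add_right (Finset.card_union_le _ _) _
      _ ≤ (m + m) + 2 := by
          refine Nat.add_le_add (Nat.add_le_add ?_ ?_) ?_
          · exact (Finset.card_image_le).trans (by simp)
          · exact (Finset.card_image_le).trans (by simp)
          · exact (Finset.card_insert_le _ _).trans (by simp)
      _ ≤ 5 * n - 3 := by omega
  · rintro Y ⟨⟨G, hGne, hYG⟩, -⟩ hsupp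
    have hYcomp : IsCompact Y := hYG ▸ G.finite_toSet.isCompact_convexHull ℝ
    have hYconv : Convex ℝ Y := hYG ▸ convex_convexHull ℝ _
    have hYne : Y.Nonempty := hYG ▸ (Finset.coe_nonempty.mpr hGne).convexHull
    have haX : a ∈ X := hXseg ▸ left_mem_segment ℝ a b
    have hbX : b ∈ X := hXseg ▸ right_mem_segment ℝ a b
    -- characterization of points of X
    have hXmem : ∀ x ∈ X, ∃ t : ℝ, t ∈ Set.Icc (0:ℝ) 1 ∧ x = a + t • u := by
      intro x hx
      rw [hXseg, segment_eq_image'] at hx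
      obtain ⟨t, ht, hxt⟩ := hx
      exact ⟨t, ht, hxt.symm⟩
    have hinner : ∀ (t : ℝ) (d : EuclideanSpace ℝ (Fin n)),
        ⟪a + t • u, d⟫ = ⟪a, d⟫ + t * ⟪u, d⟫ := fun t d => by
      rw [inner_add_left, real_inner_smul_left]
    -- support values of X
    have hsuppX_perp : ∀ d : EuclideanSpace ℝ (Fin n), ⟪u, d⟫ = 0 → supp X d = ⟪a, d⟫ := by
      intro d hd
      refine supp_eq_of_isMaxOn hXcomp haX d ?_
      intro z hz
      obtain ⟨t, ht, rfl⟩ := hXmem z hz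
      rw [hinner, hd, mul_zero, add_zero]
    have hsuppX_u : supp X u = ⟪b, u⟫ := by
      refine supp_eq_of_isMaxOn hXcomp hbX u ?_
      intro z hz
      obtain ⟨t, ht, rfl⟩ := hXmem z hz
      rw [hinner, ← hba, inner_add_left]
      nlinarith [ht.1, ht.2]
    have hsuppX_nu : supp X (-u) = ⟪a, -u⟫ := by
      refine supp_eq_of_isMaxOn hXcomp haX (-u) ?_
      intro z hz
      obtain ⟨t, ht, rfl⟩ := hXmem z hz
      rw [inner_neg_right, inner_neg_right, hinner]
      nlinarith [ht.1, ht.2]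
    -- Y ⊆ X
    have hYX : Y ⊆ X := by
      intro y hy
      have hyw : ∀ i, ⟪w i, y - a⟫ = 0 := by
        intro i
        have h1 : ⟪y, w i⟫ ≤ ⟪a, w i⟫ := by
          have := supp_le_of_mem hYcomp hy (w i)
          rwa [hsupp _ (hw_mem i), hsuppX_perp _ (hwu i)] at this
        have h2 : ⟪y, -(w i)⟫ ≤ ⟪a, -(w i)⟫ := by
          have := supp_le_of_mem hYcomp hy (-(w i))
          rwa [hsupp _ (hnw_mem i), hsuppX_perp _ (by rw [inner_neg_right, hwu i, neg_zero])]
            at this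
        rw [inner_neg_right, inner_neg_right] at h2
        rw [inner_sub_right]
        have e1 : ⟪w i, y⟫ = ⟪y, w i⟫ := real_inner_comm _ _
        have e2 : ⟪w i, a⟫ = ⟪a, w i⟫ := real_inner_comm _ _
        linarith
      have hmemO : y - a ∈ Kᗮ := by
        rw [Submodule.mem_orthogonal]
        intro k hk
        have hrep : k = ∑ i, (bK.repr ⟨k, hk⟩ i) • w i := by
          have := bK.sum_repr ⟨k, hk⟩
          calc k = ((∑ i, (bK.repr ⟨k, hk⟩ i) • bK i : K) : EuclideanSpace ℝ (Fin n)) := by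
                rw [this]
            _ = ∑ i, (bK.repr ⟨k, hk⟩ i) • w i := by
                push_cast
                rfl
        rw [hrep, sum_inner]
        refine Finset.sum_eq_zero fun i _ => ?_
        rw [real_inner_smul_left, hyw i, mul_zero]
      have hKO : Kᗮ = ℝ ∙ u := by rw [hK, Submodule.orthogonal_orthogonal]
      rw [hKO, Submodule.mem_span_singleton] at hmemO
      obtain ⟨s, hs⟩ := hmemO
      have hy_eq : y = a + s • u := by rw [hs]; abel
      have h1 : ⟪y, u⟫ ≤ ⟪b, u⟫ := by
        have := supp_le_of_mem hYcomp hy u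
        rwa [hsupp _ hu_mem, hsuppX_u] at this
      have h2 : ⟪y, -u⟫ ≤ ⟪a, -u⟫ := by
        have := supp_le_of_mem hYcomp hy (-u)
        rwa [hsupp _ hnu_mem, hsuppX_nu] at this
      rw [inner_neg_right, inner_neg_right] at h2
      rw [hy_eq, hinner] at h1 h2
      rw [← hba, inner_add_left] at h1
      have hs0 : 0 ≤ s := by nlinarith
      have hs1 : s ≤ 1 := by nlinarith
      rw [hXseg, segment_eq_image']
      exact ⟨s, ⟨hs0, hs1⟩, hy_eq.symm⟩
    -- X ⊆ Y
    have hbY : b ∈ Y := by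
      obtain ⟨y, hy, hval⟩ := exists_supp_eq hYcomp hYne u
      rw [hsupp _ hu_mem, hsuppX_u] at hval
      obtain ⟨t, ht, hyt⟩ := hXmem y (hYX hy)
      rw [hyt, hinner, ← hba, inner_add_left] at hval
      have ht1 : t = 1 := by nlinarith
      rw [ht1, one_smul, hba] at hyt
      rwa [← hyt]
    have haY : a ∈ Y := by
      obtain ⟨y, hy, hval⟩ := exists_supp_eq hYcomp hYne (-u)
      rw [hsupp _ hnu_mem, hsuppX_nu] at hval
      obtain ⟨t, ht, hyt⟩ := hXmem y (hYX hy)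
      rw [inner_neg_right, inner_neg_right, hyt, hinner] at hval
      have ht0 : t = 0 := by nlinarith
      rw [ht0, zero_smul, add_zero] at hyt
      rwa [← hyt]
    have hXY : X ⊆ Y := by
      rw [hXseg]
      exact hYconv.segment_subset haY hbY
    exact Set.Subset.antisymm hYX hXY
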